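/- Let τ, γ, η, υ > 0 and c ∈ ℝ. Consider the integrator-augmented first-order VAC dynamics ẋ(t) = −τ^{-1}( x(t) − γ(−ρ(t)) − c ), ũ(t) = x(t) + η(−ρ(t)), ż(t) = (1/υ)(−ρ(t) − (−ρ*)), u(t) = ũ(t) + z(t), where ρ* is a prescribed density set-point. Fix an equilibrium (x*, −ρ*, z*) with x* = γ(−ρ*) + c, ũ* = x* + η(−ρ*), and u* = ũ* + z*. Define V(x, z) = (τ/(2γ))(x − x*)² + (υ/2)(z − z*)². Then V(x*, z*) = 0, V > 0 elsewhere, and along every differentiable trajectory of these dynamics, dV(x(t), z(t))/dt ≤ (u(t) − u*)(−ρ(t) − (−ρ*)) − η(ρ(t) − ρ*)². In particular, the integrator-augmented first-order VAC scheme is input strictly passive about (x*, −ρ*, z*) with rate η. -/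

import Mathlib

/-- The integrator-augmented first-order VAC dynamics
`ẋ = −τ⁻¹(x − γ(−ρ) − c)`, `ũ = x + η(−ρ)`, `ż = (1/υ)(−ρ − (−ρ*))`,
`u = ũ + z`, with equilibrium `x* = γ(−ρ*) + c`, `ũ* = x* + η(−ρ*)`,
`u* = ũ* + z*`, are input strictly passive about `(x*, −ρ*, z*)` with rate
`η`: the storage function `V(x,z) = (τ/(2γ))(x − x*)² + (υ/2)(z − z*)²`
satisfies `V(x*,z*) = 0`, `V > 0` elsewhere, and along every differentiable
trajectory `dV/dt ≤ (u − u*)(−ρ − (−ρ*)) − η(ρ − ρ*)²`. -/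
theorem integrator_augmented_first_order_vac_input_strict_passivity
    (τ γ η υ : ℝ) (hτ : 0 < τ) (hγ : 0 < γ) (hη : 0 < η) (hυ : 0 < υ)
    (c ρs : ℝ) (xs uts zs us : ℝ)
    (hxs : xs = γ * (-ρs) + c) (huts : uts = xs + η * (-ρs))
    (hus : us = uts + zs)
    (V : ℝ → ℝ → ℝ)
    (hV : ∀ xv zv, V xv zv = τ / (2 * γ) * (xv - xs) ^ 2 + υ / 2 * (zv - zs) ^ 2)
    (x ρ z ut u : ℝ → ℝ)
    (hx : ∀ t, HasDerivAt x (-τ⁻¹ * (x t - γ * (-ρ t) - c)) t)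
    (hut : ∀ t, ut t = x t + η * (-ρ t))
    (hz : ∀ t, HasDerivAt z ((1 / υ) * (-ρ t - (-ρs))) t)
    (hu : ∀ t, u t = ut t + z t) :
    V xs zs = 0 ∧ (∀ xv zv, (xv, zv) ≠ (xs, zs) → 0 < V xv zv) ∧
    ∀ t, ∃ D : ℝ, HasDerivAt (fun s => V (x s) (z s)) D t ∧
      D ≤ (u t - us) * (-ρ t - (-ρs)) - η * (ρ t - ρs) ^ 2 := by
  refine ⟨by rw [hV]; ring, ?_, ?_⟩
  · intro xv zv hne
    rw [hV]
    rcases ne_or_eq xv xs with h | h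
    · have hx0 : xv - xs ≠ 0 := sub_ne_zero.mpr h
      have h1 : 0 < τ / (2 * γ) * (xv - xs) ^ 2 := by positivity
      have h2 : 0 ≤ υ / 2 * (zv - zs) ^ 2 := by positivity
      linarith
    · have hz' : zv ≠ zs := by
        intro hzv; exact hne (by rw [h, hzv])
      have h1 : 0 ≤ τ / (2 * γ) * (xv - xs) ^ 2 := by positivity
      have h2 : 0 < υ / 2 * (zv - zs) ^ 2 := by
        have : zv - zs ≠ 0 := sub_ne_zero.mpr hz'
        positivity
      linarith
  · intro t
    have hVd : HasDerivAt (fun s => V (x s) (z s))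
        (τ / (2 * γ) * (2 * (x t - xs) * (-τ⁻¹ * (x t - γ * (-ρ t) - c)))
          + υ / 2 * (2 * (z t - zs) * ((1 / υ) * (-ρ t - (-ρs))))) t := by
      have h1 : HasDerivAt (fun s => τ / (2 * γ) * (x s - xs) ^ 2)
          (τ / (2 * γ) * (2 * (x t - xs) * (-τ⁻¹ * (x t - γ * (-ρ t) - c)))) t := by
        exact (((hx t).sub_const xs).pow 2).const_mul _ |>.congr_deriv (by ring)
      have h2 : HasDerivAt (fun s => υ / 2 * (z s - zs) ^ 2)
          (υ / 2 * (2 * (z t - zs) * ((1 / υ) * (-ρ t - (-ρs))))) t := by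
        exact (((hz t).sub_const zs).pow 2).const_mul _ |>.congr_deriv (by ring)
      have := h1.add h2
      refine this.congr_of_eventuallyEq ?_
      filter_upwards with s
      rw [hV]; rfl
    refine ⟨_, hVd, ?_⟩
    have hτ' : τ ≠ 0 := ne_of_gt hτ
    have hυ' : υ ≠ 0 := ne_of_gt hυ
    have hγ' : γ ≠ 0 := ne_of_gt hγ
    have key : τ / (2 * γ) * (2 * (x t - xs) * (-τ⁻¹ * (x t - γ * (-ρ t) - c)))
        + υ / 2 * (2 * (z t - zs) * ((1 / υ) * (-ρ t - (-ρs))))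
        = -(1 / γ) * (x t - xs) ^ 2 + (x t - xs) * (-ρ t + ρs)
          + (z t - zs) * (-ρ t + ρs) := by
      rw [hxs]; field_simp; ring
    rw [key, hu t, hut t, hus, huts, hxs]
    have hsq : 0 ≤ (1 / γ) * (x t - xs) ^ 2 := by positivity
    rw [hxs] at hsq
    nlinarith [sq_nonneg (ρ t - ρs)]
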